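/- Let μ be a rotation-invariant probability measure on the unit sphere S^{2n-1} ⊂ R^{2n} = C^n with complex structure J, and let v₁, v₂ be orthonormal vectors with v₂ ⊥ {v₁, Jv₁}. Define a₁(x) = ⟨x, v₁⟩, b₁(x) = ⟨x, Jv₁⟩, a₂(x) = ⟨x, v₂⟩, b₂(x) = ⟨x, Jv₂⟩. Then for any τ, ∫ |(a₁² + b₁²) cos τ + (a₂ b₁ - a₁ b₂) sin τ| dμ ≤ ∫ (a₁² + b₁²) dμ, with equality iff cos τ = ±1 (up to sign conventions, τ = 0 mod π). -/

import Mathlib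

open MeasureTheory
open scoped RealInnerProductSpace

set_option linter.unusedSectionVars false

section SA18Aux

lemma sa18_sqsum (x y : ℝ) (h : x ^ 2 + y ^ 2 = 0) : x = 0 ∧ y = 0 := by
  constructor
  · have hx : x ^ 2 = 0 := le_antisymm (by nlinarith [sq_nonneg y]) (sq_nonneg x)
    exact pow_eq_zero_iff two_ne_zero |>.mp hx
  · have hy : y ^ 2 = 0 := le_antisymm (by nlinarith [sq_nonneg x]) (sq_nonneg y)
    exact pow_eq_zero_iff two_ne_zero |>.mp hy

lemma sa18_ptle (a b u v : ℝ) : |a * u + b * v| ≤ (a * a + b * b + u * u + v * v) / 2 := by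
  rw [abs_le]
  constructor
  · nlinarith [sq_nonneg (a + u), sq_nonneg (b + v)]
  · nlinarith [sq_nonneg (a - u), sq_nonneg (b - v)]

lemma sa18_ptle' (c s a b p q : ℝ) :
    |(a * a + b * b) * c + (p * b - a * q) * s|
      ≤ ((a * a + b * b) + ((c * a - s * q) * (c * a - s * q)
          + (c * b + s * p) * (c * b + s * p))) / 2 := by
  have h : (a * a + b * b) * c + (p * b - a * q) * s
      = a * (c * a - s * q) + b * (c * b + s * p) := by ring
  rw [h]
  calc |a * (c * a - s * q) + b * (c * b + s * p)|
      ≤ (a * a + b * b + (c * a - s * q) * (c * a - s * q)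
          + (c * b + s * p) * (c * b + s * p)) / 2 := sa18_ptle _ _ _ _
    _ = ((a * a + b * b) + ((c * a - s * q) * (c * a - s * q)
          + (c * b + s * p) * (c * b + s * p))) / 2 := by ring

lemma sa18_pt (c s a b p q : ℝ)
    (h : ((a * a + b * b) + ((c * a - s * q) * (c * a - s * q)
          + (c * b + s * p) * (c * b + s * p))) / 2
        - |(a * a + b * b) * c + (p * b - a * q) * s| = 0) :
    (c * a - s * q = a ∧ c * b + s * p = b) ∨ (c * a - s * q = -a ∧ c * b + s * p = -b) := by
  have h1 : (a * a + b * b + (c * a - s * q) * (c * a - s * q)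
      + (c * b + s * p) * (c * b + s * p)) / 2
      = |a * (c * a - s * q) + b * (c * b + s * p)| := by
    have h2 : (a * a + b * b) * c + (p * b - a * q) * s
        = a * (c * a - s * q) + b * (c * b + s * p) := by ring
    rw [← h2]
    linarith [h]
  rcases abs_cases (a * (c * a - s * q) + b * (c * b + s * p)) with ⟨h2, _⟩ | ⟨h2, _⟩
  · left
    rw [h2] at h1
    have h3 : (a - (c * a - s * q)) ^ 2 + (b - (c * b + s * p)) ^ 2 = 0 := by
      linear_combination 2 * h1
    obtain ⟨ha, hb⟩ := sa18_sqsum _ _ h3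
    constructor
    · linarith [sub_eq_zero.mp ha]
    · linarith [sub_eq_zero.mp hb]
  · right
    rw [h2] at h1
    have h3 : (a + (c * a - s * q)) ^ 2 + (b + (c * b + s * p)) ^ 2 = 0 := by
      linear_combination 2 * h1
    obtain ⟨ha, hb⟩ := sa18_sqsum _ _ h3
    constructor
    · linarith
    · linarith

lemma sa18_pt2 (c s a b p q : ℝ) (hc1 : c ≠ 1) (hc2 : c ≠ -1)
    (D1 : (c * a - s * q = a ∧ c * b + s * p = b)
        ∨ (c * a - s * q = -a ∧ c * b + s * p = -b))
    (D2 : (c * a - s * -q = a ∧ c * b + s * -p = b)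
        ∨ (c * a - s * -q = -a ∧ c * b + s * -p = -b))
    (D3 : (c * a - s * q = a ∧ c * b + s * -p = b)
        ∨ (c * a - s * q = -a ∧ c * b + s * -p = -b)) :
    a * b = 0 ∧ (c ≠ 0 → (a = 0 ∧ b = 0)) := by
  have hm1 : c - 1 ≠ 0 := sub_ne_zero.mpr hc1
  have hp1 : c + 1 ≠ 0 := by intro h; exact hc2 (by linarith)
  rcases D1 with ⟨e1, e2⟩ | ⟨e1, e2⟩ <;> rcases D2 with ⟨e3, e4⟩ | ⟨e3, e4⟩
  · have ha : a = 0 := by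
      have h : (c - 1) * a = 0 := by linarith
      exact (mul_eq_zero.mp h).resolve_left hm1
    have hb : b = 0 := by
      have h : (c - 1) * b = 0 := by linarith
      exact (mul_eq_zero.mp h).resolve_left hm1
    exact ⟨by rw [ha]; ring, fun _ => ⟨ha, hb⟩⟩
  · have hca : c * a = 0 := by linarith
    have hcb : c * b = 0 := by linarith
    refine ⟨?_, fun hc => ⟨(mul_eq_zero.mp hca).resolve_left hc,
      (mul_eq_zero.mp hcb).resolve_left hc⟩⟩
    by_cases hc : c = 0
    · subst hc
      rcases D3 with ⟨e5, e6⟩ | ⟨e5, e6⟩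
      · have hb : b = 0 := by linarith
        rw [hb]; ring
      · have ha : a = 0 := by linarith
        rw [ha]; ring
    · have ha : a = 0 := (mul_eq_zero.mp hca).resolve_left hc
      rw [ha]; ring
  · have hca : c * a = 0 := by linarith
    have hcb : c * b = 0 := by linarith
    refine ⟨?_, fun hc => ⟨(mul_eq_zero.mp hca).resolve_left hc,
      (mul_eq_zero.mp hcb).resolve_left hc⟩⟩
    by_cases hc : c = 0
    · subst hc
      rcases D3 with ⟨e5, e6⟩ | ⟨e5, e6⟩
      · have ha : a = 0 := by linarith
        rw [ha]; ring
      · have hb : b = 0 := by linarith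
        rw [hb]; ring
    · have ha : a = 0 := (mul_eq_zero.mp hca).resolve_left hc
      rw [ha]; ring
  · have ha : a = 0 := by
      have h : (c + 1) * a = 0 := by linarith
      exact (mul_eq_zero.mp h).resolve_left hp1
    have hb : b = 0 := by
      have h : (c + 1) * b = 0 := by linarith
      exact (mul_eq_zero.mp h).resolve_left hp1
    exact ⟨by rw [ha]; ring, fun _ => ⟨ha, hb⟩⟩

variable {E : Type*} [NormedAddCommGroup E] [InnerProductSpace ℝ E]
  [FiniteDimensional ℝ E] [MeasurableSpace E] [BorelSpace E]

lemma sa18_skew (J : E ≃ₗᵢ[ℝ] E) (hJ : ∀ x, J (J x) = -x) (x y : E) :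
    ⟪J x, y⟫ = -⟪x, J y⟫ := by
  have h : J (J y) = -y := hJ y
  calc ⟪J x, y⟫ = ⟪J x, -J (J y)⟫ := by rw [h, neg_neg]
    _ = -⟪J x, J (J y)⟫ := by rw [inner_neg_right]
    _ = -⟪x, J y⟫ := by rw [J.inner_map_map]

lemma sa18_inner_J_self (J : E ≃ₗᵢ[ℝ] E) (hJ : ∀ x, J (J x) = -x) (x : E) :
    ⟪x, J x⟫ = 0 := by
  have h := sa18_skew J hJ x x
  have h2 : ⟪J x, x⟫ = ⟪x, J x⟫ := real_inner_comm _ _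
  linarith

lemma sa18_rot (J : E ≃ₗᵢ[ℝ] E) (hJ : ∀ x, J (J x) = -x) :
    ∃ R : E ≃ₗᵢ[ℝ] E, ∀ x, R x = (Real.sqrt 2)⁻¹ • (x + J x) := by
  set t : ℝ := (Real.sqrt 2)⁻¹ with ht
  have hs2 : Real.sqrt 2 * Real.sqrt 2 = 2 := Real.mul_self_sqrt (by norm_num)
  have hs2pos : (0:ℝ) < Real.sqrt 2 := Real.sqrt_pos.mpr (by norm_num)
  have htpos : 0 < t := by positivity
  have htt : t * t * 2 = 1 := by
    rw [ht]; field_simp; rw [Real.sq_sqrt (by norm_num)]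
  let Jl : E →ₗ[ℝ] E := J.toLinearIsometry.toLinearMap
  let f : E →ₗ[ℝ] E := t • (LinearMap.id + Jl)
  have hfapp : ∀ x, f x = t • (x + J x) := fun x => rfl
  have hnorm : ∀ x, ‖f x‖ = ‖x‖ := by
    intro x
    have h0 : ⟪x, J x⟫ = 0 := sa18_inner_J_self J hJ x
    have h1 : ‖x + J x‖ ^ 2 = (Real.sqrt 2 * ‖x‖) ^ 2 := by
      rw [norm_add_sq_real, h0, J.norm_map]; ring_nf; nlinarith
    have h2 : ‖x + J x‖ = Real.sqrt 2 * ‖x‖ := by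
      rw [← Real.sqrt_sq (norm_nonneg (x + J x)), h1,
        Real.sqrt_sq (by positivity)]
    rw [hfapp, norm_smul, h2, Real.norm_eq_abs, abs_of_pos htpos]
    rw [← mul_assoc, ht]
    field_simp
  let fi : E →ₗᵢ[ℝ] E := ⟨f, hnorm⟩
  have hsurj : Function.Surjective fi := by
    intro y
    refine ⟨t • (y - J y), ?_⟩
    show f (t • (y - J y)) = y
    rw [_root_.map_smul, hfapp]
    have h3 : y - J y + J (y - J y) = (2:ℝ) • y := by
      rw [map_sub, hJ, sub_neg_eq_add, two_smul]; abel
    rw [h3, smul_smul, smul_smul]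
    rw [htt, one_smul]
  exact ⟨LinearIsometryEquiv.ofSurjective fi hsurj, fun x => rfl⟩

lemma sa18_integrable (μ : Measure E) [IsFiniteMeasure μ] (f : E → ℝ) (hf : Continuous f)
    (C : ℝ) (hb : ∀ᵐ x ∂μ, |f x| ≤ C) : Integrable f μ :=
  (integrable_const C).mono' hf.aestronglyMeasurable (by simpa [Real.norm_eq_abs] using hb)

lemma sa18_map_integral (μ : Measure E) (g : E ≃ₗᵢ[ℝ] E) (h : μ.map g = μ)
    (f : E → ℝ) (hf : Continuous f) : ∫ x, f (g x) ∂μ = ∫ x, f x ∂μ := by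
  have h2 := MeasureTheory.integral_map (φ := ⇑g) (f := f) (μ := μ)
    g.continuous.aemeasurable hf.aestronglyMeasurable
  rw [h] at h2
  exact h2.symm

lemma sa18_ae_comp (μ : Measure E) (g : E ≃ₗᵢ[ℝ] E) (h : μ.map g = μ)
    (F : E → ℝ) (hF : Continuous F) (h0 : ∀ᵐ x ∂μ, F x = 0) :
    ∀ᵐ x ∂μ, F (g x) = 0 := by
  rw [Filter.eventually_iff, mem_ae_iff] at h0 ⊢
  have hS : MeasurableSet ({x | F x = 0}ᶜ) :=
    ((isClosed_eq hF continuous_const).measurableSet).compl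
  have heq : {x | F (g x) = 0}ᶜ = ⇑g ⁻¹' ({x | F x = 0}ᶜ) := rfl
  rw [heq, ← Measure.map_apply (μ := μ) g.continuous.measurable hS, h]
  exact h0

lemma sa18_second_moment (μ : Measure E)
    (hinv : ∀ g : E ≃ₗᵢ[ℝ] E, μ.map g = μ) (u w : E) (hu : ‖u‖ = 1) (hw : ‖w‖ = 1) :
    ∫ x, ⟪x, u⟫ * ⟪x, u⟫ ∂μ = ∫ x, ⟪x, w⟫ * ⟪x, w⟫ ∂μ := by
  rcases eq_or_ne u w with rfl | huw
  · rfl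
  · set g : E ≃ₗᵢ[ℝ] E := Submodule.reflection (ℝ ∙ (u - w))ᗮ with hg
    have hgu : g u = w := Submodule.reflection_sub (by rw [hu, hw])
    have hcont : Continuous fun x : E => ⟪x, u⟫ * ⟪x, u⟫ :=
      (continuous_id.inner continuous_const).mul (continuous_id.inner continuous_const)
    have hmi := sa18_map_integral μ g (hinv g) (fun x => ⟪x, u⟫ * ⟪x, u⟫) hcont
    rw [← hmi]
    refine integral_congr_ae (Filter.Eventually.of_forall fun x => ?_)
    have hflip : ⟪g x, u⟫ = ⟪x, w⟫ := by
      rw [g.inner_map_eq_flip, hg, Submodule.reflection_symm, ← hg, hgu]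
    simp only []
    rw [hflip]

lemma sa18_comb (μ : Measure E) (f1 f2 f3 f4 f5 f6 : E → ℝ) (c1 c2 c3 c4 c5 c6 : ℝ)
    (h1 : Integrable f1 μ) (h2 : Integrable f2 μ) (h3 : Integrable f3 μ)
    (h4 : Integrable f4 μ) (h5 : Integrable f5 μ) (h6 : Integrable f6 μ) :
    ∫ x, (c1 * f1 x + (c2 * f2 x + (c3 * f3 x + (c4 * f4 x + (c5 * f5 x + c6 * f6 x))))) ∂μ
      = c1 * (∫ x, f1 x ∂μ) + (c2 * (∫ x, f2 x ∂μ) + (c3 * (∫ x, f3 x ∂μ)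
        + (c4 * (∫ x, f4 x ∂μ) + (c5 * (∫ x, f5 x ∂μ) + c6 * (∫ x, f6 x ∂μ))))) := by
  have i1 : Integrable (fun x => c1 * f1 x) μ := h1.const_mul c1
  have i2 : Integrable (fun x => c2 * f2 x) μ := h2.const_mul c2
  have i3 : Integrable (fun x => c3 * f3 x) μ := h3.const_mul c3
  have i4 : Integrable (fun x => c4 * f4 x) μ := h4.const_mul c4
  have i5 : Integrable (fun x => c5 * f5 x) μ := h5.const_mul c5
  have i6 : Integrable (fun x => c6 * f6 x) μ := h6.const_mul c6
  have i56 : Integrable (fun x => c5 * f5 x + c6 * f6 x) μ := i5.add i6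
  have i456 : Integrable (fun x => c4 * f4 x + (c5 * f5 x + c6 * f6 x)) μ := i4.add i56
  have i3456 : Integrable (fun x => c3 * f3 x + (c4 * f4 x + (c5 * f5 x + c6 * f6 x))) μ :=
    i3.add i456
  have i23456 : Integrable
      (fun x => c2 * f2 x + (c3 * f3 x + (c4 * f4 x + (c5 * f5 x + c6 * f6 x)))) μ :=
    i2.add i3456
  rw [integral_add i1 i23456, integral_add i2 i3456, integral_add i3 i456,
    integral_add i4 i56, integral_add i5 i6,
    integral_const_mul, integral_const_mul, integral_const_mul,
    integral_const_mul, integral_const_mul, integral_const_mul]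

end SA18Aux

set_option maxHeartbeats 2000000 in
/-- For a rotation-invariant probability measure `μ` on `S^{2n-1} ⊆ ℂⁿ`,
orthonormal `v₁, v₂` with `v₂ ⊥ {v₁, Jv₁}`, and `a₁ = ⟨x,v₁⟩, b₁ = ⟨x,Jv₁⟩,
a₂ = ⟨x,v₂⟩, b₂ = ⟨x,Jv₂⟩`:
`∫ |(a₁²+b₁²)cos τ + (a₂b₁ - a₁b₂) sin τ| dμ ≤ ∫ (a₁²+b₁²) dμ`,
with equality iff `cos τ = ±1`. -/
theorem stmt_18 (n : ℕ)
    (J : EuclideanSpace ℝ (Fin (2 * n)) ≃ₗᵢ[ℝ] EuclideanSpace ℝ (Fin (2 * n)))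
    (hJ : ∀ x, J (J x) = -x)
    (v₁ v₂ : EuclideanSpace ℝ (Fin (2 * n)))
    (hv₁ : ‖v₁‖ = 1) (hv₂ : ‖v₂‖ = 1)
    (h12 : ⟪v₁, v₂⟫ = 0) (hJ12 : ⟪J v₁, v₂⟫ = 0)
    (μ : Measure (EuclideanSpace ℝ (Fin (2 * n)))) [IsProbabilityMeasure μ]
    (hinv : ∀ g : EuclideanSpace ℝ (Fin (2 * n)) ≃ₗᵢ[ℝ] EuclideanSpace ℝ (Fin (2 * n)),
      μ.map g = μ)
    (hsphere : μ (Metric.sphere (0 : EuclideanSpace ℝ (Fin (2 * n))) 1)ᶜ = 0)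
    (τ : ℝ) :
    (∫ x, |(⟪x, v₁⟫ ^ 2 + ⟪x, J v₁⟫ ^ 2) * Real.cos τ
          + (⟪x, v₂⟫ * ⟪x, J v₁⟫ - ⟪x, v₁⟫ * ⟪x, J v₂⟫) * Real.sin τ| ∂μ
        ≤ ∫ x, (⟪x, v₁⟫ ^ 2 + ⟪x, J v₁⟫ ^ 2) ∂μ) ∧
    ((∫ x, |(⟪x, v₁⟫ ^ 2 + ⟪x, J v₁⟫ ^ 2) * Real.cos τ
          + (⟪x, v₂⟫ * ⟪x, J v₁⟫ - ⟪x, v₁⟫ * ⟪x, J v₂⟫) * Real.sin τ| ∂μ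
        = ∫ x, (⟪x, v₁⟫ ^ 2 + ⟪x, J v₁⟫ ^ 2) ∂μ)
      ↔ (Real.cos τ = 1 ∨ Real.cos τ = -1)) := by
  simp only [pow_two]
  set c := Real.cos τ with hc
  set s := Real.sin τ with hs
  -- basic inner product facts
  have hsk : ∀ x y : EuclideanSpace ℝ (Fin (2 * n)), ⟪J x, y⟫ = -⟪x, J y⟫ := sa18_skew J hJ
  have hv1J1 : ⟪v₁, J v₁⟫ = 0 := sa18_inner_J_self J hJ v₁
  have hv2J2 : ⟪v₂, J v₂⟫ = 0 := sa18_inner_J_self J hJ v₂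
  have h1J2 : ⟪v₁, J v₂⟫ = 0 := by have h := hsk v₁ v₂; rw [hJ12] at h; linarith
  have hJ1J2 : ⟪J v₁, J v₂⟫ = 0 := by rw [J.inner_map_map]; exact h12
  have hnJ1 : ‖J v₁‖ = 1 := by rw [J.norm_map]; exact hv₁
  have hnJ2 : ‖J v₂‖ = 1 := by rw [J.norm_map]; exact hv₂
  have h21 : ⟪v₂, v₁⟫ = 0 := by rw [real_inner_comm]; exact h12
  have h2J1 : ⟪v₂, J v₁⟫ = 0 := by rw [real_inner_comm]; exact hJ12
  have h2J2' : ⟪J v₂, v₂⟫ = 0 := by rw [real_inner_comm]; exact hv2J2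
  have hJ21 : ⟪J v₂, v₁⟫ = 0 := by rw [real_inner_comm]; exact h1J2
  have hJ2J1 : ⟪J v₂, J v₁⟫ = 0 := by rw [real_inner_comm]; exact hJ1J2
  have hcs : c * c + s * s = 1 := by
    have h := Real.sin_sq_add_cos_sq τ
    rw [← hc, ← hs] at h
    linear_combination h
  -- a.e. on sphere
  have haes : ∀ᵐ x ∂μ, ‖x‖ = 1 := by
    have h : ∀ᵐ x ∂μ, x ∈ Metric.sphere (0 : EuclideanSpace ℝ (Fin (2 * n))) 1 := by
      rw [Filter.eventually_iff, mem_ae_iff]; exact hsphere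
    exact h.mono fun x hx => by simpa using mem_sphere_zero_iff_norm.mp hx
  have cI : ∀ v : EuclideanSpace ℝ (Fin (2 * n)), Continuous (fun x : EuclideanSpace ℝ (Fin (2 * n)) => (⟪x, v⟫ : ℝ)) :=
    fun v => continuous_id.inner continuous_const
  -- integrability of monomials
  have hInt : ∀ u w : EuclideanSpace ℝ (Fin (2 * n)), ‖u‖ = 1 → ‖w‖ = 1 →
      Integrable (fun x => ⟪x, u⟫ * ⟪x, w⟫) μ := by
    intro u w hu hw
    refine sa18_integrable μ _ ((cI u).mul (cI w)) 1 ?_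
    filter_upwards [haes] with x hx
    have h1 : |⟪x, u⟫| ≤ 1 := by
      have := abs_real_inner_le_norm x u; rw [hx, hu] at this; simpa using this
    have h2 : |⟪x, w⟫| ≤ 1 := by
      have := abs_real_inner_le_norm x w; rw [hx, hw] at this; simpa using this
    calc |⟪x, u⟫ * ⟪x, w⟫| = |⟪x, u⟫| * |⟪x, w⟫| := abs_mul _ _
      _ ≤ 1 * 1 := mul_le_mul h1 h2 (abs_nonneg _) zero_le_one
      _ = 1 := by norm_num
  have I1 : Integrable (fun x : EuclideanSpace ℝ (Fin (2 * n)) => ⟪x, v₁⟫ * ⟪x, v₁⟫) μ := hInt v₁ v₁ hv₁ hv₁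
  have I2 : Integrable (fun x : EuclideanSpace ℝ (Fin (2 * n)) => ⟪x, J v₁⟫ * ⟪x, J v₁⟫) μ := hInt (J v₁) (J v₁) hnJ1 hnJ1
  have I3 : Integrable (fun x : EuclideanSpace ℝ (Fin (2 * n)) => ⟪x, v₂⟫ * ⟪x, v₂⟫) μ := hInt v₂ v₂ hv₂ hv₂
  have I4 : Integrable (fun x : EuclideanSpace ℝ (Fin (2 * n)) => ⟪x, J v₂⟫ * ⟪x, J v₂⟫) μ := hInt (J v₂) (J v₂) hnJ2 hnJ2
  have I5 : Integrable (fun x : EuclideanSpace ℝ (Fin (2 * n)) => ⟪x, v₂⟫ * ⟪x, J v₁⟫) μ := hInt v₂ (J v₁) hv₂ hnJ1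
  have I6 : Integrable (fun x : EuclideanSpace ℝ (Fin (2 * n)) => ⟪x, v₁⟫ * ⟪x, J v₂⟫) μ := hInt v₁ (J v₂) hv₁ hnJ2
  -- second moments
  have hm2 : ∫ x, ⟪x, J v₁⟫ * ⟪x, J v₁⟫ ∂μ = ∫ x, ⟪x, v₁⟫ * ⟪x, v₁⟫ ∂μ :=
    sa18_second_moment μ hinv (J v₁) v₁ hnJ1 hv₁
  have hm3 : ∫ x, ⟪x, v₂⟫ * ⟪x, v₂⟫ ∂μ = ∫ x, ⟪x, v₁⟫ * ⟪x, v₁⟫ ∂μ :=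
    sa18_second_moment μ hinv v₂ v₁ hv₂ hv₁
  have hm4 : ∫ x, ⟪x, J v₂⟫ * ⟪x, J v₂⟫ ∂μ = ∫ x, ⟪x, v₁⟫ * ⟪x, v₁⟫ ∂μ :=
    sa18_second_moment μ hinv (J v₂) v₁ hnJ2 hv₁
  -- reflection coordinates
  have e11 : ∀ y : EuclideanSpace ℝ (Fin (2 * n)), ⟪Submodule.reflection (ℝ ∙ v₂)ᗮ y, v₁⟫ = ⟪y, v₁⟫ := by
    intro y
    rw [LinearIsometryEquiv.inner_map_eq_flip, Submodule.reflection_symm,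
      Submodule.reflection_mem_subspace_eq_self (Submodule.mem_orthogonal_singleton_iff_inner_right.mpr h21)]
  have e12 : ∀ y : EuclideanSpace ℝ (Fin (2 * n)), ⟪Submodule.reflection (ℝ ∙ v₂)ᗮ y, J v₁⟫ = ⟪y, J v₁⟫ := by
    intro y
    rw [LinearIsometryEquiv.inner_map_eq_flip, Submodule.reflection_symm,
      Submodule.reflection_mem_subspace_eq_self (Submodule.mem_orthogonal_singleton_iff_inner_right.mpr h2J1)]
  have e13 : ∀ y : EuclideanSpace ℝ (Fin (2 * n)), ⟪Submodule.reflection (ℝ ∙ v₂)ᗮ y, v₂⟫ = -⟪y, v₂⟫ := by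
    intro y
    rw [LinearIsometryEquiv.inner_map_eq_flip, Submodule.reflection_symm,
      Submodule.reflection_orthogonalComplement_singleton_eq_neg, inner_neg_right]
  have e14 : ∀ y : EuclideanSpace ℝ (Fin (2 * n)), ⟪Submodule.reflection (ℝ ∙ v₂)ᗮ y, J v₂⟫ = ⟪y, J v₂⟫ := by
    intro y
    rw [LinearIsometryEquiv.inner_map_eq_flip, Submodule.reflection_symm,
      Submodule.reflection_mem_subspace_eq_self (Submodule.mem_orthogonal_singleton_iff_inner_right.mpr hv2J2)]
  have f11 : ∀ y : EuclideanSpace ℝ (Fin (2 * n)), ⟪Submodule.reflection (ℝ ∙ (J v₂))ᗮ y, v₁⟫ = ⟪y, v₁⟫ := by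
    intro y
    rw [LinearIsometryEquiv.inner_map_eq_flip, Submodule.reflection_symm,
      Submodule.reflection_mem_subspace_eq_self (Submodule.mem_orthogonal_singleton_iff_inner_right.mpr hJ21)]
  have f12 : ∀ y : EuclideanSpace ℝ (Fin (2 * n)), ⟪Submodule.reflection (ℝ ∙ (J v₂))ᗮ y, J v₁⟫ = ⟪y, J v₁⟫ := by
    intro y
    rw [LinearIsometryEquiv.inner_map_eq_flip, Submodule.reflection_symm,
      Submodule.reflection_mem_subspace_eq_self (Submodule.mem_orthogonal_singleton_iff_inner_right.mpr hJ2J1)]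
  have f13 : ∀ y : EuclideanSpace ℝ (Fin (2 * n)), ⟪Submodule.reflection (ℝ ∙ (J v₂))ᗮ y, v₂⟫ = ⟪y, v₂⟫ := by
    intro y
    rw [LinearIsometryEquiv.inner_map_eq_flip, Submodule.reflection_symm,
      Submodule.reflection_mem_subspace_eq_self (Submodule.mem_orthogonal_singleton_iff_inner_right.mpr h2J2')]
  have f14 : ∀ y : EuclideanSpace ℝ (Fin (2 * n)), ⟪Submodule.reflection (ℝ ∙ (J v₂))ᗮ y, J v₂⟫ = -⟪y, J v₂⟫ := by
    intro y
    rw [LinearIsometryEquiv.inner_map_eq_flip, Submodule.reflection_symm,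
      Submodule.reflection_orthogonalComplement_singleton_eq_neg, inner_neg_right]
  -- odd integrals vanish
  have hm5 : ∫ x, ⟪x, v₂⟫ * ⟪x, J v₁⟫ ∂μ = 0 := by
    have h5 := sa18_map_integral μ (Submodule.reflection (ℝ ∙ v₂)ᗮ) (hinv _)
      (fun x => ⟪x, v₂⟫ * ⟪x, J v₁⟫) ((cI v₂).mul (cI (J v₁)))
    have h6 : ∫ x, ⟪x, v₂⟫ * ⟪x, J v₁⟫ ∂μ = ∫ x, -(⟪x, v₂⟫ * ⟪x, J v₁⟫) ∂μ := by
      rw [← h5]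
      exact integral_congr_ae (Filter.Eventually.of_forall fun x => by
        simp only [e13, e12]; ring)
    have h7 := integral_neg (μ := μ) (fun x : EuclideanSpace ℝ (Fin (2 * n)) => ⟪x, v₂⟫ * ⟪x, J v₁⟫)
    rw [h7] at h6
    linarith
  have hm6 : ∫ x, ⟪x, v₁⟫ * ⟪x, J v₂⟫ ∂μ = 0 := by
    have h5 := sa18_map_integral μ (Submodule.reflection (ℝ ∙ (J v₂))ᗮ) (hinv _)
      (fun x => ⟪x, v₁⟫ * ⟪x, J v₂⟫) ((cI v₁).mul (cI (J v₂)))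
    have h6 : ∫ x, ⟪x, v₁⟫ * ⟪x, J v₂⟫ ∂μ = ∫ x, -(⟪x, v₁⟫ * ⟪x, J v₂⟫) ∂μ := by
      rw [← h5]
      exact integral_congr_ae (Filter.Eventually.of_forall fun x => by
        simp only [f11, f14]; ring)
    have h7 := integral_neg (μ := μ) (fun x : EuclideanSpace ℝ (Fin (2 * n)) => ⟪x, v₁⟫ * ⟪x, J v₂⟫)
    rw [h7] at h6
    linarith
  -- positivity of second moment
  have hMpos : 0 < ∫ x, ⟪x, v₁⟫ * ⟪x, v₁⟫ ∂μ := by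
    set bb := stdOrthonormalBasis ℝ (EuclideanSpace ℝ (Fin (2 * n))) with hbb
    have hbnorm : ∀ i, ‖bb i‖ = 1 := fun i => bb.orthonormal.1 i
    have hone : ∫ x, (∑ i, ⟪x, bb i⟫ * ⟪x, bb i⟫) ∂μ = 1 := by
      have hptw : ∀ᵐ x ∂μ, (∑ i, ⟪x, bb i⟫ * ⟪x, bb i⟫) = (1:ℝ) := by
        filter_upwards [haes] with x hx
        have h := bb.sum_inner_mul_inner x x
        have h2 : ∑ i, ⟪x, bb i⟫ * ⟪x, bb i⟫ = ∑ i, ⟪x, bb i⟫ * ⟪bb i, x⟫ :=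
          Finset.sum_congr rfl fun i _ => by rw [real_inner_comm x (bb i)]
        rw [h2, h, real_inner_self_eq_norm_mul_norm, hx]; norm_num
      calc ∫ x, (∑ i, ⟪x, bb i⟫ * ⟪x, bb i⟫) ∂μ = ∫ _, (1:ℝ) ∂μ := integral_congr_ae hptw
        _ = 1 := by simp
    have hsplit : ∫ x, (∑ i, ⟪x, bb i⟫ * ⟪x, bb i⟫) ∂μ
        = ∑ i, ∫ x, ⟪x, bb i⟫ * ⟪x, bb i⟫ ∂μ :=
      integral_finset_sum _ (fun i _ => hInt (bb i) (bb i) (hbnorm i) (hbnorm i))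
    have hval : ∀ i, ∫ x, ⟪x, bb i⟫ * ⟪x, bb i⟫ ∂μ = ∫ x, ⟪x, v₁⟫ * ⟪x, v₁⟫ ∂μ :=
      fun i => sa18_second_moment μ hinv (bb i) v₁ (hbnorm i) hv₁
    have hcard : ((2 * n : ℕ) : ℝ) * (∫ x, ⟪x, v₁⟫ * ⟪x, v₁⟫ ∂μ) = 1 := by
      have h8 : ∑ i, ∫ x, ⟪x, bb i⟫ * ⟪x, bb i⟫ ∂μ
          = ((2 * n : ℕ) : ℝ) * (∫ x, ⟪x, v₁⟫ * ⟪x, v₁⟫ ∂μ) := by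
        rw [Finset.sum_congr rfl (fun i _ => hval i), Finset.sum_const, Finset.card_univ,
          Fintype.card_fin, finrank_euclideanSpace_fin, nsmul_eq_mul]
      rw [← h8, ← hsplit, hone]
    rcases le_or_gt (∫ x, ⟪x, v₁⟫ * ⟪x, v₁⟫ ∂μ) 0 with hM | hM
    · exfalso
      have hnn : (0:ℝ) ≤ ((2 * n : ℕ) : ℝ) := Nat.cast_nonneg _
      nlinarith [hcard]
    · exact hM
  -- value of ∫ A
  have hA2 : ∫ x, (⟪x, v₁⟫ * ⟪x, v₁⟫ + ⟪x, J v₁⟫ * ⟪x, J v₁⟫) ∂μ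
      = (∫ x, ⟪x, v₁⟫ * ⟪x, v₁⟫ ∂μ) + (∫ x, ⟪x, v₁⟫ * ⟪x, v₁⟫ ∂μ) := by
    rw [integral_add I1 I2, hm2]
  -- value of ∫ (A+W)/2
  have hAWval : ∫ x, (((⟪x, v₁⟫ * ⟪x, v₁⟫ + ⟪x, J v₁⟫ * ⟪x, J v₁⟫) + ((c * ⟪x, v₁⟫ - s * ⟪x, J v₂⟫) * (c * ⟪x, v₁⟫ - s * ⟪x, J v₂⟫) + (c * ⟪x, J v₁⟫ + s * ⟪x, v₂⟫) * (c * ⟪x, J v₁⟫ + s * ⟪x, v₂⟫))) / 2) ∂μ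
      = (∫ x, ⟪x, v₁⟫ * ⟪x, v₁⟫ ∂μ) + (∫ x, ⟪x, v₁⟫ * ⟪x, v₁⟫ ∂μ) := by
    calc ∫ x, (((⟪x, v₁⟫ * ⟪x, v₁⟫ + ⟪x, J v₁⟫ * ⟪x, J v₁⟫) + ((c * ⟪x, v₁⟫ - s * ⟪x, J v₂⟫) * (c * ⟪x, v₁⟫ - s * ⟪x, J v₂⟫) + (c * ⟪x, J v₁⟫ + s * ⟪x, v₂⟫) * (c * ⟪x, J v₁⟫ + s * ⟪x, v₂⟫))) / 2) ∂μ
        = ∫ x, ((1 + c * c) / 2 * (⟪x, v₁⟫ * ⟪x, v₁⟫)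
          + ((1 + c * c) / 2 * (⟪x, J v₁⟫ * ⟪x, J v₁⟫)
          + (s * s / 2 * (⟪x, v₂⟫ * ⟪x, v₂⟫)
          + (s * s / 2 * (⟪x, J v₂⟫ * ⟪x, J v₂⟫)
          + (c * s * (⟪x, v₂⟫ * ⟪x, J v₁⟫)
          + -(c * s) * (⟪x, v₁⟫ * ⟪x, J v₂⟫)))))) ∂μ :=
          integral_congr_ae (Filter.Eventually.of_forall fun x => by ring)
      _ = (1 + c * c) / 2 * (∫ x, ⟪x, v₁⟫ * ⟪x, v₁⟫ ∂μ)
          + ((1 + c * c) / 2 * (∫ x, ⟪x, J v₁⟫ * ⟪x, J v₁⟫ ∂μ)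
          + (s * s / 2 * (∫ x, ⟪x, v₂⟫ * ⟪x, v₂⟫ ∂μ)
          + (s * s / 2 * (∫ x, ⟪x, J v₂⟫ * ⟪x, J v₂⟫ ∂μ)
          + (c * s * (∫ x, ⟪x, v₂⟫ * ⟪x, J v₁⟫ ∂μ)
          + -(c * s) * (∫ x, ⟪x, v₁⟫ * ⟪x, J v₂⟫ ∂μ))))) :=
          sa18_comb μ _ _ _ _ _ _ _ _ _ _ _ _ I1 I2 I3 I4 I5 I6
      _ = (∫ x, ⟪x, v₁⟫ * ⟪x, v₁⟫ ∂μ) + (∫ x, ⟪x, v₁⟫ * ⟪x, v₁⟫ ∂μ) := by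
          rw [hm2, hm3, hm4, hm5, hm6]
          linear_combination (∫ x, ⟪x, v₁⟫ * ⟪x, v₁⟫ ∂μ) * hcs
  -- integrability of the main functions
  have hIntf : Integrable (fun x : EuclideanSpace ℝ (Fin (2 * n)) =>
      (⟪x, v₁⟫ * ⟪x, v₁⟫ + ⟪x, J v₁⟫ * ⟪x, J v₁⟫) * c + (⟪x, v₂⟫ * ⟪x, J v₁⟫ - ⟪x, v₁⟫ * ⟪x, J v₂⟫) * s) μ :=
    ((I1.add I2).mul_const c).add ((I5.sub I6).mul_const s)
  have hIntAbs : Integrable (fun x : EuclideanSpace ℝ (Fin (2 * n)) => |(⟪x, v₁⟫ * ⟪x, v₁⟫ + ⟪x, J v₁⟫ * ⟪x, J v₁⟫) * c + (⟪x, v₂⟫ * ⟪x, J v₁⟫ - ⟪x, v₁⟫ * ⟪x, J v₂⟫) * s|) μ := hIntf.abs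
  have hcombInt : Integrable (fun x : EuclideanSpace ℝ (Fin (2 * n)) =>
      ((1 + c * c) / 2 * (⟪x, v₁⟫ * ⟪x, v₁⟫)
          + ((1 + c * c) / 2 * (⟪x, J v₁⟫ * ⟪x, J v₁⟫)
          + (s * s / 2 * (⟪x, v₂⟫ * ⟪x, v₂⟫)
          + (s * s / 2 * (⟪x, J v₂⟫ * ⟪x, J v₂⟫)
          + (c * s * (⟪x, v₂⟫ * ⟪x, J v₁⟫)
          + -(c * s) * (⟪x, v₁⟫ * ⟪x, J v₂⟫))))))) μ :=
    (I1.const_mul _).add ((I2.const_mul _).add ((I3.const_mul _).add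
      ((I4.const_mul _).add ((I5.const_mul _).add (I6.const_mul _)))))
  have hAWeq : ∀ x : EuclideanSpace ℝ (Fin (2 * n)), ((1 + c * c) / 2 * (⟪x, v₁⟫ * ⟪x, v₁⟫)
          + ((1 + c * c) / 2 * (⟪x, J v₁⟫ * ⟪x, J v₁⟫)
          + (s * s / 2 * (⟪x, v₂⟫ * ⟪x, v₂⟫)
          + (s * s / 2 * (⟪x, J v₂⟫ * ⟪x, J v₂⟫)
          + (c * s * (⟪x, v₂⟫ * ⟪x, J v₁⟫)
          + -(c * s) * (⟪x, v₁⟫ * ⟪x, J v₂⟫)))))) = (((⟪x, v₁⟫ * ⟪x, v₁⟫ + ⟪x, J v₁⟫ * ⟪x, J v₁⟫) + ((c * ⟪x, v₁⟫ - s * ⟪x, J v₂⟫) * (c * ⟪x, v₁⟫ - s * ⟪x, J v₂⟫) + (c * ⟪x, J v₁⟫ + s * ⟪x, v₂⟫) * (c * ⟪x, J v₁⟫ + s * ⟪x, v₂⟫))) / 2) := fun x => by ring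
  have hIntAW : Integrable (fun x : EuclideanSpace ℝ (Fin (2 * n)) => (((⟪x, v₁⟫ * ⟪x, v₁⟫ + ⟪x, J v₁⟫ * ⟪x, J v₁⟫) + ((c * ⟪x, v₁⟫ - s * ⟪x, J v₂⟫) * (c * ⟪x, v₁⟫ - s * ⟪x, J v₂⟫) + (c * ⟪x, J v₁⟫ + s * ⟪x, v₂⟫) * (c * ⟪x, J v₁⟫ + s * ⟪x, v₂⟫))) / 2)) μ :=
    hcombInt.congr (Filter.Eventually.of_forall hAWeq)
  -- the pointwise bound
  have hptle : ∀ x : EuclideanSpace ℝ (Fin (2 * n)), |(⟪x, v₁⟫ * ⟪x, v₁⟫ + ⟪x, J v₁⟫ * ⟪x, J v₁⟫) * c + (⟪x, v₂⟫ * ⟪x, J v₁⟫ - ⟪x, v₁⟫ * ⟪x, J v₂⟫) * s| ≤ (((⟪x, v₁⟫ * ⟪x, v₁⟫ + ⟪x, J v₁⟫ * ⟪x, J v₁⟫) + ((c * ⟪x, v₁⟫ - s * ⟪x, J v₂⟫) * (c * ⟪x, v₁⟫ - s * ⟪x, J v₂⟫) + (c * ⟪x, J v₁⟫ + s * ⟪x,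 v₂⟫) * (c * ⟪x, J v₁⟫ + s * ⟪x, v₂⟫))) / 2) :=
    fun x => sa18_ptle' c s ⟪x, v₁⟫ ⟪x, J v₁⟫ ⟪x, v₂⟫ ⟪x, J v₂⟫
  -- main inequality
  have hineq : ∫ x, |(⟪x, v₁⟫ * ⟪x, v₁⟫ + ⟪x, J v₁⟫ * ⟪x, J v₁⟫) * c + (⟪x, v₂⟫ * ⟪x, J v₁⟫ - ⟪x, v₁⟫ * ⟪x, J v₂⟫) * s| ∂μ ≤ ∫ x, (⟪x, v₁⟫ * ⟪x, v₁⟫ + ⟪x, J v₁⟫ * ⟪x, J v₁⟫) ∂μ := by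
    calc ∫ x, |(⟪x, v₁⟫ * ⟪x, v₁⟫ + ⟪x, J v₁⟫ * ⟪x, J v₁⟫) * c + (⟪x, v₂⟫ * ⟪x, J v₁⟫ - ⟪x, v₁⟫ * ⟪x, J v₂⟫) * s| ∂μ ≤ ∫ x, (((⟪x, v₁⟫ * ⟪x, v₁⟫ + ⟪x, J v₁⟫ * ⟪x, J v₁⟫) + ((c * ⟪x, v₁⟫ - s * ⟪x, J v₂⟫) * (c * ⟪x, v₁⟫ - s * ⟪x, J v₂⟫) + (c * ⟪x, J v₁⟫ + s * ⟪x, v₂⟫) * (c * ⟪x, J v₁⟫ + s * ⟪x, v₂⟫))) / 2) ∂μ := integral_mono hIntAbs hIntAW hptle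
      _ = (∫ x, ⟪x, v₁⟫ * ⟪x, v₁⟫ ∂μ) + (∫ x, ⟪x, v₁⟫ * ⟪x, v₁⟫ ∂μ) := hAWval
      _ = ∫ x, (⟪x, v₁⟫ * ⟪x, v₁⟫ + ⟪x, J v₁⟫ * ⟪x, J v₁⟫) ∂μ := hA2.symm
  refine ⟨hineq, ?_, ?_⟩
  · -- equality implies cos τ = ±1
    intro heq
    by_contra hcc
    push_neg at hcc
    obtain ⟨hc1, hc2⟩ := hcc
    -- the deficiency function vanishes a.e.
    have hFnn : (0 : EuclideanSpace ℝ (Fin (2 * n)) → ℝ) ≤ (fun x : EuclideanSpace ℝ (Fin (2 * n)) => ((((⟪x, v₁⟫ * ⟪x, v₁⟫ + ⟪x, J v₁⟫ * ⟪x, J v₁⟫) + ((c * ⟪x, v₁⟫ - s * ⟪x, J v₂⟫) * (c * ⟪x, v₁⟫ - s * ⟪x, J v₂⟫) + (c * ⟪x, J v₁⟫ + s * ⟪x, v₂⟫) * (c * ⟪x, J v₁⟫ + s * ⟪x, v₂⟫))) / 2) - |(⟪x, v₁⟫ * ⟪x, v₁⟫ + ⟪x, J v₁⟫ * ⟪x,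 J v₁⟫) * c + (⟪x, v₂⟫ * ⟪x, J v₁⟫ - ⟪x, v₁⟫ * ⟪x, J v₂⟫) * s|)) :=
      fun x => sub_nonneg.mpr (hptle x)
    have hFint : Integrable (fun x : EuclideanSpace ℝ (Fin (2 * n)) => ((((⟪x, v₁⟫ * ⟪x, v₁⟫ + ⟪x, J v₁⟫ * ⟪x, J v₁⟫) + ((c * ⟪x, v₁⟫ - s * ⟪x, J v₂⟫) * (c * ⟪x, v₁⟫ - s * ⟪x, J v₂⟫) + (c * ⟪x, J v₁⟫ + s * ⟪x, v₂⟫) * (c * ⟪x, J v₁⟫ + s * ⟪x, v₂⟫))) / 2) - |(⟪x, v₁⟫ * ⟪x, v₁⟫ + ⟪x, J v₁⟫ * ⟪x, J v₁⟫) * c + (⟪x, v₂⟫ * ⟪x, J v₁⟫ - ⟪x, v₁⟫ * ⟪x, J v₂⟫) * s|)) μ := hIntAW.sub hIntAbs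
    have hFzero : ∫ x, ((((⟪x, v₁⟫ * ⟪x, v₁⟫ + ⟪x, J v₁⟫ * ⟪x, J v₁⟫) + ((c * ⟪x, v₁⟫ - s * ⟪x, J v₂⟫) * (c * ⟪x, v₁⟫ - s * ⟪x, J v₂⟫) + (c * ⟪x, J v₁⟫ + s * ⟪x, v₂⟫) * (c * ⟪x, J v₁⟫ + s * ⟪x, v₂⟫))) / 2) - |(⟪x, v₁⟫ * ⟪x, v₁⟫ + ⟪x, J v₁⟫ * ⟪x, J v₁⟫) * c + (⟪x, v₂⟫ * ⟪x, J v₁⟫ - ⟪x, v₁⟫ * ⟪x, J v₂⟫) * s|) ∂μ = 0 := by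
      rw [integral_sub hIntAW hIntAbs, hAWval, heq, hA2]
      ring
    have hFae := (integral_eq_zero_iff_of_nonneg hFnn hFint).mp hFzero
    have hF0 : ∀ᵐ x ∂μ, ((((⟪x, v₁⟫ * ⟪x, v₁⟫ + ⟪x, J v₁⟫ * ⟪x, J v₁⟫) + ((c * ⟪x, v₁⟫ - s * ⟪x, J v₂⟫) * (c * ⟪x, v₁⟫ - s * ⟪x, J v₂⟫) + (c * ⟪x, J v₁⟫ + s * ⟪x, v₂⟫) * (c * ⟪x, J v₁⟫ + s * ⟪x, v₂⟫))) / 2) - |(⟪x, v₁⟫ * ⟪x, v₁⟫ + ⟪x, J v₁⟫ * ⟪x, J v₁⟫) * c + (⟪x, v₂⟫ * ⟪x, J v₁⟫ - ⟪x, v₁⟫ * ⟪x, J v₂⟫) * s|) = 0 := hFae.mono fun x hx => hx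
    -- continuity of the deficiency function
    have hFc : Continuous (fun x : EuclideanSpace ℝ (Fin (2 * n)) => ((((⟪x, v₁⟫ * ⟪x, v₁⟫ + ⟪x, J v₁⟫ * ⟪x, J v₁⟫) + ((c * ⟪x, v₁⟫ - s * ⟪x, J v₂⟫) * (c * ⟪x, v₁⟫ - s * ⟪x, J v₂⟫) + (c * ⟪x, J v₁⟫ + s * ⟪x, v₂⟫) * (c * ⟪x, J v₁⟫ + s * ⟪x, v₂⟫))) / 2) - |(⟪x, v₁⟫ * ⟪x, v₁⟫ + ⟪x, J v₁⟫ * ⟪x, J v₁⟫) * c + (⟪x, v₂⟫ * ⟪x, J v₁⟫ - ⟪x, v₁⟫ * ⟪x, J v₂⟫) * s|)) := by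
      have cA : Continuous (fun x : EuclideanSpace ℝ (Fin (2 * n)) => (⟪x, v₁⟫ * ⟪x, v₁⟫ + ⟪x, J v₁⟫ * ⟪x, J v₁⟫)) :=
        ((cI v₁).mul (cI v₁)).add ((cI (J v₁)).mul (cI (J v₁)))
      have cB : Continuous (fun x : EuclideanSpace ℝ (Fin (2 * n)) => (⟪x, v₂⟫ * ⟪x, J v₁⟫ - ⟪x, v₁⟫ * ⟪x, J v₂⟫)) :=
        ((cI v₂).mul (cI (J v₁))).sub ((cI v₁).mul (cI (J v₂)))
      have cU : Continuous (fun x : EuclideanSpace ℝ (Fin (2 * n)) => (c * ⟪x, v₁⟫ - s * ⟪x, J v₂⟫)) :=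
        (continuous_const.mul (cI v₁)).sub (continuous_const.mul (cI (J v₂)))
      have cV : Continuous (fun x : EuclideanSpace ℝ (Fin (2 * n)) => (c * ⟪x, J v₁⟫ + s * ⟪x, v₂⟫)) :=
        (continuous_const.mul (cI (J v₁))).add (continuous_const.mul (cI v₂))
      exact (((cA.add ((cU.mul cU).add (cV.mul cV))).div_const 2)).sub
        (((cA.mul continuous_const).add (cB.mul continuous_const)).abs)
    -- the rotation by π/4 in each complex line
    obtain ⟨R, hRapp⟩ := sa18_rot J hJ
    set t : ℝ := (Real.sqrt 2)⁻¹ with htdef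
    have ht0 : t ≠ 0 := by
      rw [htdef]
      exact inv_ne_zero (ne_of_gt (Real.sqrt_pos.mpr (by norm_num)))
    have g11 : ∀ y : EuclideanSpace ℝ (Fin (2 * n)), ⟪R y, v₁⟫ = t * (⟪y, v₁⟫ - ⟪y, J v₁⟫) := by
      intro y
      rw [hRapp, real_inner_smul_left, inner_add_left, hsk y v₁]
      ring
    have g12 : ∀ y : EuclideanSpace ℝ (Fin (2 * n)), ⟪R y, J v₁⟫ = t * (⟪y, J v₁⟫ + ⟪y, v₁⟫) := by
      intro y
      rw [hRapp, real_inner_smul_left, inner_add_left, J.inner_map_map]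
    have g13 : ∀ y : EuclideanSpace ℝ (Fin (2 * n)), ⟪R y, v₂⟫ = t * (⟪y, v₂⟫ - ⟪y, J v₂⟫) := by
      intro y
      rw [hRapp, real_inner_smul_left, inner_add_left, hsk y v₂]
      ring
    have g14 : ∀ y : EuclideanSpace ℝ (Fin (2 * n)), ⟪R y, J v₂⟫ = t * (⟪y, J v₂⟫ + ⟪y, v₂⟫) := by
      intro y
      rw [hRapp, real_inner_smul_left, inner_add_left, J.inner_map_map]
    -- transferred a.e. identities
    have hE2 := sa18_ae_comp μ ((Submodule.reflection (ℝ ∙ v₂)ᗮ).trans (Submodule.reflection (ℝ ∙ (J v₂))ᗮ)) (hinv _)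
      (fun x : EuclideanSpace ℝ (Fin (2 * n)) => ((((⟪x, v₁⟫ * ⟪x, v₁⟫ + ⟪x, J v₁⟫ * ⟪x, J v₁⟫) + ((c * ⟪x, v₁⟫ - s * ⟪x, J v₂⟫) * (c * ⟪x, v₁⟫ - s * ⟪x, J v₂⟫) + (c * ⟪x, J v₁⟫ + s * ⟪x, v₂⟫) * (c * ⟪x, J v₁⟫ + s * ⟪x, v₂⟫))) / 2) - |(⟪x, v₁⟫ * ⟪x, v₁⟫ + ⟪x, J v₁⟫ * ⟪x, J v₁⟫) * c + (⟪x, v₂⟫ * ⟪x, J v₁⟫ - ⟪x, v₁⟫ * ⟪x, J v₂⟫) * s|)) hFc hF0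
    have hE3 := sa18_ae_comp μ (Submodule.reflection (ℝ ∙ v₂)ᗮ) (hinv _)
      (fun x : EuclideanSpace ℝ (Fin (2 * n)) => ((((⟪x, v₁⟫ * ⟪x, v₁⟫ + ⟪x, J v₁⟫ * ⟪x, J v₁⟫) + ((c * ⟪x, v₁⟫ - s * ⟪x, J v₂⟫) * (c * ⟪x, v₁⟫ - s * ⟪x, J v₂⟫) + (c * ⟪x, J v₁⟫ + s * ⟪x, v₂⟫) * (c * ⟪x, J v₁⟫ + s * ⟪x, v₂⟫))) / 2) - |(⟪x, v₁⟫ * ⟪x, v₁⟫ + ⟪x, J v₁⟫ * ⟪x, J v₁⟫) * c + (⟪x, v₂⟫ * ⟪x, J v₁⟫ - ⟪x, v₁⟫ * ⟪x, J v₂⟫) * s|)) hFc hF0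
    have hE1' := sa18_ae_comp μ R (hinv _)
      (fun x : EuclideanSpace ℝ (Fin (2 * n)) => ((((⟪x, v₁⟫ * ⟪x, v₁⟫ + ⟪x, J v₁⟫ * ⟪x, J v₁⟫) + ((c * ⟪x, v₁⟫ - s * ⟪x, J v₂⟫) * (c * ⟪x, v₁⟫ - s * ⟪x, J v₂⟫) + (c * ⟪x, J v₁⟫ + s * ⟪x, v₂⟫) * (c * ⟪x, J v₁⟫ + s * ⟪x, v₂⟫))) / 2) - |(⟪x, v₁⟫ * ⟪x, v₁⟫ + ⟪x, J v₁⟫ * ⟪x, J v₁⟫) * c + (⟪x, v₂⟫ * ⟪x, J v₁⟫ - ⟪x, v₁⟫ * ⟪x, J v₂⟫) * s|)) hFc hF0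
    have hE2' := sa18_ae_comp μ (R.trans ((Submodule.reflection (ℝ ∙ v₂)ᗮ).trans (Submodule.reflection (ℝ ∙ (J v₂))ᗮ))) (hinv _)
      (fun x : EuclideanSpace ℝ (Fin (2 * n)) => ((((⟪x, v₁⟫ * ⟪x, v₁⟫ + ⟪x, J v₁⟫ * ⟪x, J v₁⟫) + ((c * ⟪x, v₁⟫ - s * ⟪x, J v₂⟫) * (c * ⟪x, v₁⟫ - s * ⟪x, J v₂⟫) + (c * ⟪x, J v₁⟫ + s * ⟪x, v₂⟫) * (c * ⟪x, J v₁⟫ + s * ⟪x, v₂⟫))) / 2) - |(⟪x, v₁⟫ * ⟪x, v₁⟫ + ⟪x, J v₁⟫ * ⟪x, J v₁⟫) * c + (⟪x, v₂⟫ * ⟪x, J v₁⟫ - ⟪x, v₁⟫ * ⟪x, J v₂⟫) * s|)) hFc hF0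
    have hE3' := sa18_ae_comp μ (R.trans (Submodule.reflection (ℝ ∙ v₂)ᗮ)) (hinv _)
      (fun x : EuclideanSpace ℝ (Fin (2 * n)) => ((((⟪x, v₁⟫ * ⟪x, v₁⟫ + ⟪x, J v₁⟫ * ⟪x, J v₁⟫) + ((c * ⟪x, v₁⟫ - s * ⟪x, J v₂⟫) * (c * ⟪x, v₁⟫ - s * ⟪x, J v₂⟫) + (c * ⟪x, J v₁⟫ + s * ⟪x, v₂⟫) * (c * ⟪x, J v₁⟫ + s * ⟪x, v₂⟫))) / 2) - |(⟪x, v₁⟫ * ⟪x, v₁⟫ + ⟪x, J v₁⟫ * ⟪x, J v₁⟫) * c + (⟪x, v₂⟫ * ⟪x, J v₁⟫ - ⟪x, v₁⟫ * ⟪x, J v₂⟫) * s|)) hFc hF0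
    -- a.e. vanishing of a₁² + b₁²
    have hAae : ∀ᵐ x ∂μ, (⟪x, v₁⟫ * ⟪x, v₁⟫ + ⟪x, J v₁⟫ * ⟪x, J v₁⟫) = 0 := by
      filter_upwards [hF0, hE2, hE3, hE1', hE2', hE3'] with x h1 h2 h3 h1' h2' h3'
      have d1 := sa18_pt c s _ _ _ _ h1
      have d2 := sa18_pt c s _ _ _ _ h2
      have d3 := sa18_pt c s _ _ _ _ h3
      have d1' := sa18_pt c s _ _ _ _ h1'
      have d2' := sa18_pt c s _ _ _ _ h2'
      have d3' := sa18_pt c s _ _ _ _ h3'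
      rw [LinearIsometryEquiv.trans_apply, f11, f12, f13, f14, e11, e12, e13, e14] at d2
      rw [e11, e12, e13, e14] at d3
      rw [g11, g12, g13, g14] at d1'
      rw [LinearIsometryEquiv.trans_apply, LinearIsometryEquiv.trans_apply,
        f11, f12, f13, f14, e11, e12, e13, e14, g11, g12, g13, g14] at d2'
      rw [LinearIsometryEquiv.trans_apply, e11, e12, e13, e14, g11, g12, g13, g14] at d3'
      obtain ⟨hab, himp⟩ := sa18_pt2 c s ⟪x, v₁⟫ ⟪x, J v₁⟫ ⟪x, v₂⟫ ⟪x, J v₂⟫ hc1 hc2 d1 d2 d3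
      obtain ⟨hab', _⟩ := sa18_pt2 c s (t * (⟪x, v₁⟫ - ⟪x, J v₁⟫)) (t * (⟪x, J v₁⟫ + ⟪x, v₁⟫))
        (t * (⟪x, v₂⟫ - ⟪x, J v₂⟫)) (t * (⟪x, J v₂⟫ + ⟪x, v₂⟫)) hc1 hc2 d1' d2' d3'
      by_cases hc0 : c = 0
      · have h6 : t * t * ((⟪x, v₁⟫ - ⟪x, J v₁⟫) * (⟪x, J v₁⟫ + ⟪x, v₁⟫)) = 0 := by
          linear_combination hab'
        have h7 : (⟪x, v₁⟫ - ⟪x, J v₁⟫) * (⟪x, J v₁⟫ + ⟪x, v₁⟫) = 0 :=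
          (mul_eq_zero.mp h6).resolve_left (mul_ne_zero ht0 ht0)
        rcases mul_eq_zero.mp hab with h9 | h9 <;> rcases mul_eq_zero.mp h7 with h8 | h8 <;>
        · have ha0 : ⟪x, v₁⟫ = 0 := by linarith
          have hb0 : ⟪x, J v₁⟫ = 0 := by linarith
          rw [ha0, hb0]; ring
      · obtain ⟨ha0, hb0⟩ := himp hc0
        rw [ha0, hb0]; ring
    have hint0 : ∫ x, (⟪x, v₁⟫ * ⟪x, v₁⟫ + ⟪x, J v₁⟫ * ⟪x, J v₁⟫) ∂μ = 0 := by
      have h := integral_congr_ae (μ := μ) (g := fun _ : EuclideanSpace ℝ (Fin (2 * n)) => (0:ℝ)) hAae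
      simpa using h
    linarith [hMpos, hA2, hint0]
  · -- cos τ = ±1 implies equality
    intro h
    have hs20 : s * s = 0 := by
      rcases h with h | h
      · linear_combination hcs - (c + 1) * h
      · linear_combination hcs - (c - 1) * h
    have hs0 : s = 0 := mul_self_eq_zero.mp hs20
    refine integral_congr_ae (Filter.Eventually.of_forall fun x => ?_)
    beta_reduce
    rcases h with h | h
    · rw [h, hs0, mul_one, mul_zero, add_zero]
      exact abs_of_nonneg (add_nonneg (mul_self_nonneg _) (mul_self_nonneg _))
    · rw [h, hs0, mul_zero, add_zero, mul_neg_one, abs_neg]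
      exact abs_of_nonneg (add_nonneg (mul_self_nonneg _) (mul_self_nonneg _))
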